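/- arXiv:1608.06462 — 2 statements merged into one kernel-verified Lean document; each statement's English description precedes it below -/
import Mathlib

section
/- Let G be a flow graph with start vertex s and dominator tree D. Let v be an ancestor of w in D, and let u be a vertex that is not a descendant of v in D. Then every path in G from u to w contains v. -/
open scoped Classical

namespace Dominators

variable {V : Type*}

/-- A walk in a digraph `E` from `u` to `w`, recorded as the list of its vertices. -/
inductive Walk (E : V → V → Prop) : V → V → List V → Prop
  | nil (v : V) : Walk E v v [v]
  | cons {u v w : V} {p : List V} (h : E u v) (hw : Walk E v w p) : Walk E u w (u :: p)

/-- `v` is reachable from `s` in the flow graph `(E, s)`. -/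
def Reachable (E : V → V → Prop) (s v : V) : Prop := ∃ p, Walk E s v p

/-- `v` dominates `w` in the flow graph `(E, s)`: every walk from `s` to `w` contains `v`.
In the dominator tree `D`, `v` is an ancestor of `w` iff `v` dominates `w`. -/
def Dom (E : V → V → Prop) (s v w : V) : Prop := ∀ p, Walk E s w p → v ∈ p

/-- `v` is the immediate dominator of `w` (the parent of `w` in the dominator tree):
a proper dominator of `w` that is dominated by every proper dominator of `w`. -/
def IsIdom (E : V → V → Prop) (s v w : V) : Prop :=
  v ≠ w ∧ Dom E s v w ∧ ∀ u, u ≠ w → Dom E s u w → Dom E s u v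

/-- `z` is the nearest common ancestor of `x` and `y` in the dominator tree of `(E, s)`. -/
def IsNca (E : V → V → Prop) (s z x y : V) : Prop :=
  Dom E s z x ∧ Dom E s z y ∧ ∀ u, Dom E s u x → Dom E s u y → Dom E s u z

/-- The graph obtained from `E` by inserting the edge `(x, y)`. -/
def Ins (E : V → V → Prop) (x y : V) : V → V → Prop := fun a b => E a b ∨ (a = x ∧ b = y)

/-- `v` is affected by the insertion of edge `(x, y)`: its immediate dominator
(parent in the dominator tree) changes. -/
def Affected (E : V → V → Prop) (s x y v : V) : Prop :=
  ∃ a b, IsIdom E s a v ∧ IsIdom (Ins E x y) s b v ∧ a ≠ b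

/-- `depth` is a depth function for the dominator tree of `(E, s)`. -/
def IsDepth (E : V → V → Prop) (s : V) (depth : V → ℕ) : Prop :=
  depth s = 0 ∧ ∀ v u, Reachable E s v → v ≠ s → IsIdom E s u v → depth v = depth u + 1

/-- `δ` is a preorder of the dominator tree of `(E, s)`: it is injective on reachable
vertices, every vertex precedes (or equals) its descendants, and the descendants of every
vertex are consecutive. -/
def IsPreorderOfD (E : V → V → Prop) (s : V) (δ : V → ℕ) : Prop :=
  (∀ u v, Reachable E s u → Reachable E s v → u ≠ v → δ u ≠ δ v) ∧
  (∀ v u, Reachable E s u → Dom E s v u → δ v ≤ δ u) ∧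
  (∀ v a b, Reachable E s b → Dom E s v a → δ v ≤ δ b → δ b ≤ δ a → Dom E s v b)

/-- `δ` is a low-high order for the vertex `v` in `(E, s)`: either the edge from the
parent `d(v)` of `v` in the dominator tree is in `E`, or `v` has two entering edges
`(u, v)` and `(w, v)` with `u`, `w` reachable, `u <_δ v <_δ w`, and `w` not a
descendant of `v` in the dominator tree. -/
def LowHighFor (E : V → V → Prop) (s : V) (δ : V → ℕ) (v : V) : Prop :=
  (∃ q, IsIdom E s q v ∧ E q v) ∨
  ∃ u w, E u v ∧ E w v ∧ Reachable E s u ∧ Reachable E s w ∧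
    δ u < δ v ∧ δ v < δ w ∧ ¬ Dom E s v w

/-- `δ` is a low-high order of the flow graph `(E, s)`. -/
def IsLowHigh (E : V → V → Prop) (s : V) (δ : V → ℕ) : Prop :=
  IsPreorderOfD E s δ ∧ ∀ v, Reachable E s v → v ≠ s → LowHighFor E s δ v

/-- The edge relation of the spanning tree with parent function `par`, rooted at `s`,
on the vertices reachable in `(E, s)`. -/
def TreeRel (E : V → V → Prop) (s : V) (par : V → V) : V → V → Prop :=
  fun a b => Reachable E s b ∧ b ≠ s ∧ par b = a

/-- `par` is (the parent function of) a spanning tree of the flow graph `(E, s)`. -/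
def IsSpanningTree (E : V → V → Prop) (s : V) (par : V → V) : Prop :=
  (∀ v, Reachable E s v → v ≠ s → E (par v) v) ∧
  (∀ v, Reachable E s v → ∃ p, Walk (TreeRel E s par) s v p)

/-- The spanning trees with parent functions `b` and `r` are divergent: for every
reachable `v`, the tree paths from `s` to `v` share only the dominators of `v`. -/
def Divergent (E : V → V → Prop) (s : V) (b r : V → V) : Prop :=
  ∀ v p q, Reachable E s v → Walk (TreeRel E s b) s v p → Walk (TreeRel E s r) s v q →
    ∀ u, u ∈ p → u ∈ q → Dom E s u v

lemma walk_append {E : V → V → Prop} {a b c : V} {p q : List V}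
    (h1 : Walk E a b p) (h2 : Walk E b c q) :
    ∃ r, Walk E a c r ∧ ∀ x ∈ r, x ∈ p ∨ x ∈ q := by
  induction h1 with
  | nil v => exact ⟨q, h2, fun x hx => Or.inr hx⟩
  | cons h hw ih =>
    obtain ⟨r, hr, hmem⟩ := ih h2
    exact ⟨_ :: r, Walk.cons h hr, by
      intro x hx
      rcases List.mem_cons.mp hx with rfl | hx
      · exact Or.inl List.mem_cons_self
      · rcases hmem x hx with h' | h'
        · exact Or.inl (List.mem_cons_of_mem _ h')
        · exact Or.inr h'⟩

/-- If `v` is an ancestor of `w` in the dominator tree (i.e. `v` dominates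
`w`), and `u` is not a descendant of `v` (i.e. `v` does not dominate `u`), then every
path in `G` from `u` to `w` contains `v`. -/
theorem stmt1 (E : V → V → Prop) (s v w u : V)
    (hw : Reachable E s w) (hu : Reachable E s u)
    (hvw : Dom E s v w) (hnd : ¬ Dom E s v u) :
    ∀ p, Walk E u w p → v ∈ p := by
  intro p hp
  by_contra hvp
  simp only [Dom, not_forall] at hnd
  obtain ⟨q, hq, hvq⟩ := hnd
  obtain ⟨r, hr, hmem⟩ := walk_append hq hp
  rcases hmem v (hvw r hr) with h | h
  · exact hvq h
  · exact hvp h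

end Dominators
end

section
/- Let G be a flow graph with start vertex s, dominator tree D, and an inserted edge (x,y) with x,y reachable. Let delta be a low-high order of G and let delta' be any preorder of the updated dominator tree D' that agrees with delta (i.e., for any pair of unaffected siblings u,v in D, u precedes v in delta' iff u precedes v in delta). Then for every reachable vertex v that is neither affected nor a child of nca(x,y) in D, delta' is a low-high order for v in the updated graph G'. -/
open scoped Classical

namespace Dominators

variable {V : Type*}

section AuxWalk

variable {F : V → V → Prop} {s a b c d u v : V} {p q : List V}

lemma Walk.start_mem (h : Walk F a b p) : a ∈ p := by
  cases h <;> simp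

lemma Walk.end_mem (h : Walk F a b p) : b ∈ p := by
  induction h with
  | nil v => simp
  | cons e hw ih => exact List.mem_cons_of_mem _ ih

lemma Walk.head_eq (h : Walk F a b p) : ∃ p', p = a :: p' := by
  cases h with
  | nil => exact ⟨[], rfl⟩
  | cons e hw => exact ⟨_, rfl⟩

lemma Walk.append (h : Walk F a b p) : ∀ {c : V} {q : List V}, Walk F b c q →
    Walk F a c (p ++ q.tail) := by
  induction h with
  | nil v =>
      intro c q h'
      obtain ⟨q', rfl⟩ := h'.head_eq
      simpa using h'
  | cons e _ ih =>
      intro c q h'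
      exact Walk.cons e (ih h')

lemma Walk.concat (h : Walk F a c p) : ∀ {d : V}, F c d → Walk F a d (p ++ [d]) := by
  induction h with
  | nil v => intro d e; exact Walk.cons e (Walk.nil d)
  | cons e' _ ih => intro d e; exact Walk.cons e' (ih e)

lemma Walk.eq_of_singleton (h : Walk F a b [c]) : a = b := by
  cases h with
  | nil => rfl
  | cons e hw => cases hw

lemma Walk.splitLast (h : Walk F a b p) : ∀ {u : V}, u ∈ p →
    ∃ p1 p2, p = p1 ++ u :: p2 ∧ Walk F a u (p1 ++ [u]) ∧ Walk F u b (u :: p2) ∧ u ∉ p2 := by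
  induction h with
  | nil v =>
      intro u hu
      rw [List.mem_singleton] at hu
      subst hu
      exact ⟨[], [], rfl, Walk.nil _, Walk.nil _, List.not_mem_nil⟩
  | @cons a' v' b' p' e hw ih =>
      intro u hu
      by_cases hup : u ∈ p'
      · obtain ⟨p1, p2, heq, w1, w2, hnp⟩ := ih hup
        refine ⟨a' :: p1, p2, by rw [heq]; rfl, Walk.cons e w1, w2, hnp⟩
      · have hua : u = a' := by
          rcases List.mem_cons.mp hu with h | h
          · exact h
          · exact absurd h hup
        subst hua
        exact ⟨[], p', rfl, Walk.nil _, Walk.cons e hw, hup⟩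

lemma dom_self : Dom F s v v := fun _ hp => hp.end_mem

lemma dom_start : Dom F s s v := fun _ hp => hp.start_mem

lemma not_dom_iff : ¬ Dom F s a b ↔ ∃ p, Walk F s b p ∧ a ∉ p := by
  constructor
  · intro h
    by_contra h'
    push_neg at h'
    exact h (fun p hp => h' p hp)
  · rintro ⟨p, hp, hap⟩ h
    exact hap (h p hp)

lemma reachable_of_mem_walk (h : Walk F s b p) (hu : u ∈ p) : Reachable F s u := by
  obtain ⟨p1, p2, _, w1, _, _⟩ := h.splitLast hu
  exact ⟨_, w1⟩

lemma dom_trans (hab : Dom F s a b) (hbc : Dom F s b c) : Dom F s a c := by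
  intro p hp
  obtain ⟨p1, p2, rfl, w1, _, _⟩ := hp.splitLast (hbc p hp)
  have := hab _ w1
  rcases List.mem_append.mp this with h | h
  · exact List.mem_append.mpr (Or.inl h)
  · rw [List.mem_singleton] at h
    subst h
    exact List.mem_append.mpr (Or.inr List.mem_cons_self)

lemma reachable_of_dom (h : Dom F s a u) (hr : Reachable F s u) : Reachable F s a := by
  obtain ⟨p, hp⟩ := hr
  exact reachable_of_mem_walk hp (h p hp)

lemma dom_antisymm (hru : Reachable F s u) (hau : Dom F s a u) (hua : Dom F s u a) :
    a = u := by
  by_contra hne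
  obtain ⟨p0, hp0⟩ := hru
  suffices h : ∀ n, ∀ p : List V, p.length ≤ n → ¬ Walk F s u p from
    h p0.length p0 le_rfl hp0
  intro n
  induction n with
  | zero =>
      intro p hl hp
      have : p = [] := List.length_eq_zero_iff.mp (Nat.le_zero.mp hl)
      subst this
      exact (List.not_mem_nil) hp.start_mem
  | succ n ih =>
      intro p hl hp
      obtain ⟨r1, r2, rfl, w1, _, _⟩ := hp.splitLast (hau p hp)
      have huw : u ∈ r1 ++ [a] := hua _ w1
      have hur1 : u ∈ r1 := by
        rcases List.mem_append.mp huw with h | h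
        · exact h
        · rw [List.mem_singleton] at h
          exact absurd h.symm hne
      obtain ⟨t1, t2, heq, wt, wsuf, _⟩ := w1.splitLast (List.mem_append_left _ hur1)
      have ht2 : t2 ≠ [] := by
        intro h
        subst h
        exact hne (wsuf.eq_of_singleton).symm
      have e1 : r1.length + 1 = t1.length + (t2.length + 1) := by
        have := congrArg List.length heq
        simpa using this
      have hlen : (t1 ++ [u]).length ≤ n := by
        have h2 : 1 ≤ t2.length := List.length_pos_iff.mpr ht2
        have h3 : r1.length + (r2.length + 1) ≤ n + 1 := by
          simpa using hl
        simp only [List.length_append, List.length_singleton]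
        omega
      exact ih (t1 ++ [u]) hlen wt

lemma dom_comparable (hru : Reachable F s u) (ha : Dom F s a u) (hb : Dom F s b u) :
    Dom F s a b ∨ Dom F s b a := by
  by_cases hab : a = b
  · subst hab; exact Or.inl dom_self
  by_contra hcon
  push_neg at hcon
  obtain ⟨hnab, hnba⟩ := hcon
  obtain ⟨r, hr, har⟩ := not_dom_iff.mp hnab
  obtain ⟨r', hr', hbr'⟩ := not_dom_iff.mp hnba
  obtain ⟨p, hp⟩ := hru
  obtain ⟨p1, p2, rfl, _, w2, hbp2⟩ := hp.splitLast (hb p hp)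
  have hcomp : Walk F s u (r ++ p2) := by simpa using hr.append w2
  have hap2 : a ∈ p2 := by
    rcases List.mem_append.mp (ha _ hcomp) with h | h
    · exact absurd h har
    · exact h
  obtain ⟨m1, m2, heq, _, wa, _⟩ := w2.splitLast (List.mem_cons_of_mem _ hap2)
  cases m1 with
  | nil =>
      rw [List.nil_append] at heq
      injection heq with h1 _
      exact hab h1.symm
  | cons c t =>
      rw [List.cons_append] at heq
      injection heq with h1 h2
      have hcomp2 : Walk F s u (r' ++ m2) := by simpa using hr'.append wa
      have hbm : b ∈ m2 := by
        rcases List.mem_append.mp (hb _ hcomp2) with h | h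
        · exact absurd h hbr'
        · exact h
      apply hbp2
      rw [h2]
      exact List.mem_append.mpr (Or.inr (List.mem_cons_of_mem _ hbm))

lemma isIdom_unique {g h : V} (hrv : Reachable F s v)
    (h1 : IsIdom F s g v) (h2 : IsIdom F s h v) : g = h := by
  have hgh : Dom F s g h := h2.2.2 g h1.1 h1.2.1
  have hhg : Dom F s h g := h1.2.2 h h2.1 h2.2.1
  exact dom_antisymm (reachable_of_dom h2.2.1 hrv) hgh hhg

lemma exists_max_list (r : V → V → Prop) (P : V → Prop)
    (hrefl : ∀ a, P a → r a a)
    (htrans : ∀ a b c, P a → P b → P c → r a b → r b c → r a c)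
    (htot : ∀ a b, P a → P b → r a b ∨ r b a) :
    ∀ l : List V, (∃ u ∈ l, P u) → ∃ q, P q ∧ ∀ u ∈ l, P u → r u q := by
  intro l
  induction l with
  | nil => rintro ⟨u, hu, _⟩; exact absurd hu List.not_mem_nil
  | cons c0 t0 ih =>
      intro hex
      by_cases hPc : P c0
      · by_cases hext : ∃ u ∈ t0, P u
        · obtain ⟨q, hPq, hq⟩ := ih hext
          rcases htot c0 q hPc hPq with h | h
          · refine ⟨q, hPq, ?_⟩
            rintro u hu hPu
            rcases List.mem_cons.mp hu with rfl | hu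
            · exact h
            · exact hq u hu hPu
          · refine ⟨c0, hPc, ?_⟩
            rintro u hu hPu
            rcases List.mem_cons.mp hu with rfl | hu
            · exact hrefl _ hPc
            · exact htrans u q c0 hPu hPq hPc (hq u hu hPu) h
        · refine ⟨c0, hPc, ?_⟩
          rintro u hu hPu
          rcases List.mem_cons.mp hu with rfl | hu
          · exact hrefl _ hPc
          · exact absurd ⟨u, hu, hPu⟩ hext
      · have hext : ∃ u ∈ t0, P u := by
          obtain ⟨u, hu, hPu⟩ := hex
          rcases List.mem_cons.mp hu with rfl | h
          · exact absurd hPu hPc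
          · exact ⟨u, h, hPu⟩
        obtain ⟨q, hPq, hq⟩ := ih hext
        refine ⟨q, hPq, ?_⟩
        rintro u hu hPu
        rcases List.mem_cons.mp hu with rfl | hu
        · exact absurd hPu hPc
        · exact hq u hu hPu

lemma exists_isIdom (hrv : Reachable F s v) (hvs : v ≠ s) : ∃ q, IsIdom F s q v := by
  obtain ⟨p, hp⟩ := id hrv
  have hmax := exists_max_list (fun a b => Dom F s a b) (fun u => u ≠ v ∧ Dom F s u v)
    (fun a _ => dom_self)
    (fun a b c _ _ _ hab hbc => dom_trans hab hbc)
    (fun a b ha hb => dom_comparable hrv ha.2 hb.2)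
    p ⟨s, hp.start_mem, Ne.symm hvs, dom_start⟩
  obtain ⟨q, ⟨hqv, hqd⟩, hm⟩ := hmax
  refine ⟨q, hqv, hqd, ?_⟩
  intro u huv hud
  exact hm u (hud p hp) ⟨huv, hud⟩

lemma idom_dom_in_neighbor {q u : V} (hq : IsIdom F s q v) (e : F u v) : Dom F s q u := by
  intro r hr
  have hw : Walk F s v (r ++ [v]) := hr.concat e
  rcases List.mem_append.mp (hq.2.1 _ hw) with h | h
  · exact h
  · rw [List.mem_singleton] at h
    exact absurd h hq.1

end AuxWalk

section AuxIns

variable {E : V → V → Prop} {s x y : V}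

lemma walk_ins_of_walk {a b : V} {p : List V} (h : Walk E a b p) : Walk (Ins E x y) a b p := by
  induction h with
  | nil v => exact Walk.nil v
  | cons e _ ih => exact Walk.cons (Or.inl e) ih

lemma reachable_ins {v : V} (h : Reachable E s v) : Reachable (Ins E x y) s v := by
  obtain ⟨p, hp⟩ := h
  exact ⟨p, walk_ins_of_walk hp⟩

lemma dom_of_dom_ins {a b : V} (h : Dom (Ins E x y) s a b) : Dom E s a b :=
  fun p hp => h p (walk_ins_of_walk hp)

lemma ins_walk_decomp {a b : V} {p : List V} (h : Walk (Ins E x y) a b p) :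
    Walk E a b p ∨ ∃ p1 p2, p = p1 ++ p2 ∧ Walk E a x p1 ∧ Walk (Ins E x y) y b p2 := by
  induction h with
  | nil v => exact Or.inl (Walk.nil v)
  | @cons a' v' b' p' e hw ih =>
      have e' : E a' v' ∨ (a' = x ∧ v' = y) := e
      rcases e' with he | ⟨ha, hb⟩
      · rcases ih with h | ⟨p1, p2, heq, w1, w2⟩
        · exact Or.inl (Walk.cons he h)
        · exact Or.inr ⟨a' :: p1, p2, by rw [heq]; rfl, Walk.cons he w1, w2⟩
      · subst ha; subst hb
        exact Or.inr ⟨[a'], p', rfl, Walk.nil a', hw⟩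

lemma walk_append_ins {a b : V} {p1 p2 : List V} (h1 : Walk E a x p1)
    (h2 : Walk (Ins E x y) y b p2) : Walk (Ins E x y) a b (p1 ++ p2) := by
  have w1 : Walk (Ins E x y) a x p1 := walk_ins_of_walk h1
  have w2 : Walk (Ins E x y) a y (p1 ++ [y]) := w1.concat (Or.inr ⟨rfl, rfl⟩)
  have w3 := w2.append h2
  obtain ⟨p2', rfl⟩ := h2.head_eq
  simpa using w3

lemma ins_walk_final_segment :
    ∀ n {a b : V} (p : List V), p.length ≤ n → Walk (Ins E x y) a b p →
      ∃ f, (∀ t ∈ f, t ∈ p) ∧ (Walk E a b f ∨ Walk E y b f) := by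
  intro n
  induction n with
  | zero =>
      intro a b p hl hp
      have : p = [] := List.length_eq_zero_iff.mp (Nat.le_zero.mp hl)
      subst this
      exact absurd hp.start_mem List.not_mem_nil
  | succ n ih =>
      intro a b p hl hp
      rcases ins_walk_decomp hp with h | ⟨p1, p2, rfl, w1, w2⟩
      · exact ⟨p, fun t ht => ht, Or.inl h⟩
      · have hlen : p2.length ≤ n := by
          obtain ⟨q', rfl⟩ := w1.head_eq
          simp only [List.length_append, List.length_cons] at hl
          omega
        obtain ⟨f, hf, hor⟩ := ih p2 hlen w2
        refine ⟨f, fun t ht => List.mem_append.mpr (Or.inr (hf t ht)), ?_⟩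
        rcases hor with h | h
        · exact Or.inr h
        · exact Or.inr h

lemma dom_ins_of_dom_dom_x {u v : V} (hv : Dom E s u v) (hx : Dom E s u x) :
    Dom (Ins E x y) s u v := by
  intro p hp
  rcases ins_walk_decomp hp with h | ⟨p1, p2, rfl, w1, _⟩
  · exact hv p h
  · exact List.mem_append.mpr (Or.inl (hx p1 w1))

lemma lost_dominator {t m : V} (hmt : Dom E s m t) (hnot : ¬ Dom (Ins E x y) s m t) :
    Dom E s m y ∧ ¬ Dom E s m x ∧ ∃ f, Walk E y t f ∧ m ∉ f := by
  obtain ⟨P, hP, hmP⟩ := not_dom_iff.mp hnot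
  rcases ins_walk_decomp hP with h | ⟨p1, p2, rfl, w1, w2⟩
  · exact absurd (hmt _ h) hmP
  · have hmp1 : m ∉ p1 := fun h => hmP (List.mem_append.mpr (Or.inl h))
    have hmp2 : m ∉ p2 := fun h => hmP (List.mem_append.mpr (Or.inr h))
    obtain ⟨f, hf, hor⟩ := ins_walk_final_segment p2.length p2 le_rfl w2
    have hfw : Walk E y t f := by rcases hor with h | h <;> exact h
    have hmf : m ∉ f := fun h => hmp2 (hf _ h)
    refine ⟨?_, fun hmx => hmp1 (hmx p1 w1), f, hfw, hmf⟩
    intro r hr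
    by_contra hmr
    have hwt : Walk E s t (r ++ f.tail) := hr.append hfw
    rcases List.mem_append.mp (hmt _ hwt) with h | h
    · exact hmr h
    · exact hmf (List.mem_of_mem_tail h)

lemma affected_new_idom {z : V} (hzx : Dom E s z x) (hzy : Dom E s z y)
    (hnca : ∀ u, Dom E s u x → Dom E s u y → Dom E s u z)
    (hry : Reachable E s y)
    {t : V} (hrt : Reachable E s t) (haff : Affected E s x y t) :
    IsIdom (Ins E x y) s z t := by
  obtain ⟨a0, b0, hA0, hB0, hne⟩ := haff
  suffices h : b0 = z by rw [← h]; exact hB0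
  have hrt' : Reachable (Ins E x y) s t := reachable_ins hrt
  have hra0 : Reachable E s a0 := reachable_of_dom hA0.2.1 hrt
  have hbt : Dom E s b0 t := dom_of_dom_ins hB0.2.1
  have hrb0 : Reachable E s b0 := reachable_of_dom hbt hrt
  have hlost : ¬ Dom (Ins E x y) s a0 t := by
    intro hd
    have h1 : Dom (Ins E x y) s a0 b0 := hB0.2.2 a0 hA0.1 hd
    have h2 : Dom E s b0 a0 := hA0.2.2 b0 hB0.1 hbt
    exact hne (dom_antisymm hrb0 (dom_of_dom_ins h1) h2)
  obtain ⟨hmy, hmx, f, hfw, hmf⟩ := lost_dominator hA0.2.1 hlost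
  have hza0 : Dom E s z a0 := by
    rcases dom_comparable hry hmy hzy with h | h
    · exact absurd (dom_trans h hzx) hmx
    · exact h
  have hzne : z ≠ a0 := fun h => hmx (h ▸ hzx)
  have hzt : Dom E s z t := dom_trans hza0 hA0.2.1
  have hrzE : Reachable E s z := reachable_of_dom hzt hrt
  have hzt' : Dom (Ins E x y) s z t := dom_ins_of_dom_dom_x hzt hzx
  have hrz' : Reachable (Ins E x y) s z := reachable_of_dom hzt' hrt'
  have hznet : z ≠ t := by
    intro h
    subst h
    exact hzne (dom_antisymm hra0 hza0 hA0.2.1)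
  rcases dom_comparable hrt' hB0.2.1 hzt' with h | h
  · exact dom_antisymm hrz' h (hB0.2.2 z hznet hzt')
  · by_cases hbz : b0 = z
    · exact hbz
    exfalso
    have hba0 : Dom E s b0 a0 := hA0.2.2 b0 hB0.1 hbt
    have hby : Dom E s b0 y := dom_trans hba0 hmy
    have hbx : ¬ Dom E s b0 x := by
      intro hbx
      exact hbz (dom_antisymm hrzE (hnca b0 hbx hby) (dom_of_dom_ins h))
    have hbf : b0 ∉ f := by
      intro hbf
      obtain ⟨f1, f2, hfeq, _, wsuf, _⟩ := hfw.splitLast hbf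
      have ha0nf2 : a0 ∉ b0 :: f2 := by
        intro h'
        apply hmf
        rw [hfeq]
        exact List.mem_append.mpr (Or.inr h')
      have ha0b0 : Dom E s a0 b0 := by
        intro r hr
        have hw : Walk E s t (r ++ f2) := by simpa using hr.append wsuf
        rcases List.mem_append.mp (hA0.2.1 _ hw) with h' | h'
        · exact h'
        · exact absurd (List.mem_cons_of_mem _ h') ha0nf2
      exact hne (dom_antisymm hrb0 ha0b0 hba0)
    obtain ⟨r1, hr1, hbr1⟩ := not_dom_iff.mp hbx
    have hwalk : Walk (Ins E x y) s t (r1 ++ f) := walk_append_ins hr1 (walk_ins_of_walk hfw)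
    rcases List.mem_append.mp (hB0.2.1 _ hwalk) with h' | h'
    · exact hbr1 h'
    · exact hbf h'

end AuxIns

/-- Let `δ` be a low-high order of `G` and `δ'` a preorder of the updated
dominator tree that agrees with `δ` on unaffected siblings. Then for every reachable
vertex `v` that is neither affected nor a child of `nca(x,y)` in `D`, `δ'` is a
low-high order for `v` in the updated graph `G'`. -/
theorem stmt5 (E : V → V → Prop) (s x y z : V) (δ δ' : V → ℕ)
    (hx : Reachable E s x) (hy : Reachable E s y)
    (hz : IsNca E s z x y)
    (hδ : IsLowHigh E s δ)
    (hδ' : IsPreorderOfD (Ins E x y) s δ')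
    (hagree : ∀ u v q, Reachable E s u → Reachable E s v → u ≠ v →
      ¬ Affected E s x y u → ¬ Affected E s x y v →
      IsIdom E s q u → IsIdom E s q v →
      (δ' u < δ' v ↔ δ u < δ v)) :
    ∀ v, Reachable E s v → v ≠ s → ¬ Affected E s x y v → ¬ IsIdom E s z v →
      LowHighFor (Ins E x y) s δ' v := by
  intro v hRv hvs hA hnz
  have hRv' : Reachable (Ins E x y) s v := reachable_ins hRv
  obtain ⟨q, hq⟩ := exists_isIdom hRv hvs
  obtain ⟨q2, hq2⟩ := exists_isIdom hRv' hvs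
  have hqq2 : q = q2 := by
    by_contra h
    exact hA ⟨q, q2, hq, hq2, h⟩
  have hq' : IsIdom (Ins E x y) s q v := by rw [hqq2]; exact hq2
  have hqz : q ≠ z := fun h => hnz (h ▸ hq)
  have hrq' : Reachable (Ins E x y) s q := reachable_of_dom hq'.2.1 hRv'
  have hrqE : Reachable E s q := reachable_of_dom hq.2.1 hRv
  have key : ∀ a', IsIdom (Ins E x y) s q a' → Reachable E s a' →
      IsIdom E s q a' ∧ ¬ Affected E s x y a' := by
    intro a' hqa' hra'
    have ha's : a' ≠ s := by
      intro h
      have hm := hqa'.2.1 [s] (by rw [h]; exact Walk.nil s)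
      exact hqa'.1 ((List.mem_singleton.mp hm).trans h.symm)
    have hnaff : ¬ Affected E s x y a' := by
      intro haff
      have hid := affected_new_idom hz.1 hz.2.1 hz.2.2 hy hra' haff
      exact hqz (isIdom_unique (reachable_ins hra') hqa' hid)
    obtain ⟨g0, hg0⟩ := exists_isIdom hra' ha's
    have hg0q : g0 = q := by
      by_contra hne
      exact hnaff ⟨g0, q, hg0, hqa', hne⟩
    exact ⟨hg0q ▸ hg0, hnaff⟩
  rcases hδ.2 v hRv hvs with ⟨g, hgid, hgE⟩ | ⟨u, w, heu, hew, hru, hrw, huv, hvw, hndom⟩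
  · have hgq : g = q := isIdom_unique hRv hgid hq
    rw [hgq] at hgE
    exact Or.inl ⟨q, hq', Or.inl hgE⟩
  · have hru' : Reachable (Ins E x y) s u := reachable_ins hru
    have hrw' : Reachable (Ins E x y) s w := reachable_ins hrw
    have hqu' : Dom (Ins E x y) s q u := idom_dom_in_neighbor hq' (Or.inl heu)
    have hqw' : Dom (Ins E x y) s q w := idom_dom_in_neighbor hq' (Or.inl hew)
    have hneuv : u ≠ v := fun h => absurd huv (h ▸ lt_irrefl _)
    have hnotvu : ¬ Dom (Ins E x y) s v u := by
      intro h
      exact absurd (hδ.1.2.1 v u hru (dom_of_dom_ins h)) (not_le.mpr huv)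
    refine Or.inr ⟨u, w, Or.inl heu, Or.inl hew, hru', hrw', ?_, ?_,
      fun hd => hndom (dom_of_dom_ins hd)⟩
    · -- δ' u < δ' v
      by_cases hdom : Dom (Ins E x y) s u v
      · exact lt_of_le_of_ne (hδ'.2.1 u v hRv' hdom) (hδ'.1 u v hru' hRv' hneuv)
      · obtain ⟨pu, hpu⟩ := id hru'
        have hexc := exists_max_list (fun d e => Dom (Ins E x y) s e d)
          (fun d => Dom (Ins E x y) s d u ∧ ¬ Dom (Ins E x y) s d v)
          (fun d _ => dom_self)
          (fun d e f _ _ _ h1 h2 => dom_trans h2 h1)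
          (fun d e hd he => (dom_comparable hru' hd.1 he.1).symm)
          pu ⟨u, hpu.end_mem, dom_self, hdom⟩
        obtain ⟨a', ⟨hau, hnav⟩, htop⟩ := hexc
        have hra'' : Reachable (Ins E x y) s a' := reachable_of_dom hau hru'
        have ha'u : a' ≠ s := fun h => hnav (h ▸ dom_start)
        obtain ⟨g', hg'⟩ := exists_isIdom hra'' ha'u
        have hg'u : Dom (Ins E x y) s g' u := dom_trans hg'.2.1 hau
        have hg'v : Dom (Ins E x y) s g' v := by
          by_contra h
          have hcon := htop g' (hg'u pu hpu) ⟨hg'u, h⟩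
          exact hg'.1 (dom_antisymm hra'' hg'.2.1 hcon)
        have hg'q : g' = q := by
          have hqa' : Dom (Ins E x y) s q a' := by
            rcases dom_comparable hru' hau hqu' with h | h
            · exact absurd (dom_trans h hq'.2.1) hnav
            · exact h
          have hqnea' : q ≠ a' := fun h => hnav (h ▸ hq'.2.1)
          have h1 : Dom (Ins E x y) s q g' := hg'.2.2 q hqnea' hqa'
          have hg'nev : g' ≠ v := fun h => hnotvu (by rw [← h]; exact hg'u)
          have h2 : Dom (Ins E x y) s g' q := hq'.2.2 g' hg'nev hg'v
          exact dom_antisymm hrq' h2 h1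
        have hraE : Reachable E s a' := by
          obtain ⟨pe, hpe⟩ := id hru
          exact reachable_of_mem_walk hpe (hau pe (walk_ins_of_walk hpe))
        obtain ⟨hqaE, hnaffa⟩ := key a' (hg'q ▸ hg') hraE
        have hnea'v : a' ≠ v := fun h => hnav (by rw [h]; exact dom_self)
        have hδav : δ a' < δ v :=
          lt_of_le_of_lt (hδ.1.2.1 a' u hru (dom_of_dom_ins hau)) huv
        have hδ'av : δ' a' < δ' v :=
          (hagree a' v q hraE hRv hnea'v hnaffa hA hqaE hq).mpr hδav
        by_contra hcon
        push_neg at hcon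
        exact hnav (hδ'.2.2 a' u v hRv' hau (le_of_lt hδ'av) hcon)
    · -- δ' v < δ' w
      have hnwv : ¬ Dom (Ins E x y) s w v := by
        intro h
        exact absurd (hδ.1.2.1 w v hRv (dom_of_dom_ins h)) (not_le.mpr hvw)
      obtain ⟨pw, hpw⟩ := id hrw'
      have hexc := exists_max_list (fun d e => Dom (Ins E x y) s e d)
        (fun d => Dom (Ins E x y) s d w ∧ ¬ Dom (Ins E x y) s d v)
        (fun d _ => dom_self)
        (fun d e f _ _ _ h1 h2 => dom_trans h2 h1)
        (fun d e hd he => (dom_comparable hrw' hd.1 he.1).symm)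
        pw ⟨w, hpw.end_mem, dom_self, hnwv⟩
      obtain ⟨b'', ⟨hbw, hnbv⟩, htop⟩ := hexc
      have hrb'' : Reachable (Ins E x y) s b'' := reachable_of_dom hbw hrw'
      have hb''s : b'' ≠ s := fun h => hnbv (h ▸ dom_start)
      obtain ⟨g'', hg''⟩ := exists_isIdom hrb'' hb''s
      have hg''w : Dom (Ins E x y) s g'' w := dom_trans hg''.2.1 hbw
      have hnvw' : ¬ Dom (Ins E x y) s v w := fun h => hndom (dom_of_dom_ins h)
      have hg''v : Dom (Ins E x y) s g'' v := by
        by_contra h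
        have hcon := htop g'' (hg''w pw hpw) ⟨hg''w, h⟩
        exact hg''.1 (dom_antisymm hrb'' hg''.2.1 hcon)
      have hg''q : g'' = q := by
        have hqb'' : Dom (Ins E x y) s q b'' := by
          rcases dom_comparable hrw' hbw hqw' with h | h
          · exact absurd (dom_trans h hq'.2.1) hnbv
          · exact h
        have hqneb : q ≠ b'' := fun h => hnbv (h ▸ hq'.2.1)
        have h1 : Dom (Ins E x y) s q g'' := hg''.2.2 q hqneb hqb''
        have hg''nev : g'' ≠ v := fun h => hnvw' (by rw [← h]; exact hg''w)
        have h2 : Dom (Ins E x y) s g'' q := hq'.2.2 g'' hg''nev hg''v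
        exact dom_antisymm hrq' h2 h1
      have hrbE : Reachable E s b'' := by
        obtain ⟨pe, hpe⟩ := id hrw
        exact reachable_of_mem_walk hpe (hbw pe (walk_ins_of_walk hpe))
      obtain ⟨hqbE, hnaffb⟩ := key b'' (hg''q ▸ hg'') hrbE
      have hnevb : v ≠ b'' := fun h => hnbv (by rw [← h]; exact dom_self)
      have hnebv : b'' ≠ v := fun h => hnevb h.symm
      have hδvb : δ v < δ b'' := by
        by_contra h
        push_neg at h
        have hbv : Dom E s b'' v :=
          hδ.1.2.2 b'' w v hRv (dom_of_dom_ins hbw) h (le_of_lt hvw)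
        have h1 : Dom E s b'' q := hq.2.2 b'' hnebv hbv
        have h2 : b'' = q := dom_antisymm hrqE h1 hqbE.2.1
        exact hnbv (by rw [h2]; exact hq'.2.1)
      have hδ'vb : δ' v < δ' b'' :=
        (hagree v b'' q hRv hrbE hnevb hA hnaffb hq hqbE).mpr hδvb
      exact lt_of_lt_of_le hδ'vb (hδ'.2.1 b'' w hrw' hbw)

end Dominators
end
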